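/- Let μ be a measure with upper s-parabolic growth of degree n+1 with constant 1, and let Q̂ be an s-parabolic cube with A-small boundary that is (2, 3^{n+2})-doubling. Then (1/μ(Q̂)) ∫_{Q̂} ( ∫_{2Q̂∖Q̂} |x̄−ȳ|_{p_s}^{-(n+1)} dμ(ȳ) ) dμ(x̄) ≤ C(n,s,A). -/

import Mathlib

open MeasureTheory Set
open scoped ENNReal

noncomputable section

/-- The `s`-parabolic distance on `ℝⁿ × ℝ`. -/
def pdist (n : ℕ) (s : ℝ) (z w : (Fin n → ℝ) × ℝ) : ℝ :=
  max ‖z.1 - w.1‖ (|z.2 - w.2| ^ (1 / (2 * s)))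

/-- The `s`-parabolic distance from a point to a set. -/
def pdistToSet (n : ℕ) (s : ℝ) (z : (Fin n → ℝ) × ℝ) (S : Set ((Fin n → ℝ) × ℝ)) : ℝ :=
  sInf ((fun w => pdist n s z w) '' S)

/-- The open `s`-parabolic ball of center `z` and radius `r`. -/
def pBall (n : ℕ) (s : ℝ) (z : (Fin n → ℝ) × ℝ) (r : ℝ) : Set ((Fin n → ℝ) × ℝ) :=
  {w | pdist n s w z < r}

/-- The closed `s`-parabolic cube with center `c` and side length `h`. -/
def parCubeC (n : ℕ) (s : ℝ) (c : (Fin n → ℝ) × ℝ) (h : ℝ) : Set ((Fin n → ℝ) × ℝ) :=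
  {z | (∀ i, |z.1 i - c.1 i| ≤ h / 2) ∧ |z.2 - c.2| ≤ h ^ (2 * s) / 2}

variable {n : ℕ} {s : ℝ}

lemma pdist_nonneg (z w : (Fin n → ℝ) × ℝ) : 0 ≤ pdist n s z w :=
  le_trans (norm_nonneg _) (le_max_left _ _)

lemma pdist_comm (z w : (Fin n → ℝ) × ℝ) : pdist n s z w = pdist n s w z := by
  unfold pdist
  rw [norm_sub_rev, abs_sub_comm]

lemma pdist_triangle (hs : 1/2 < s) (hs1 : s ≤ 1) (x y z : (Fin n → ℝ) × ℝ) :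
    pdist n s x z ≤ pdist n s x y + pdist n s y z := by
  have hq0 : 0 ≤ 1 / (2*s) := by positivity
  have hq1 : 1 / (2*s) ≤ 1 := by
    rw [div_le_one (by linarith)]; linarith
  refine max_le ?_ ?_
  · calc ‖x.1 - z.1‖ ≤ ‖x.1 - y.1‖ + ‖y.1 - z.1‖ := norm_sub_le_norm_sub_add_norm_sub _ _ _
      _ ≤ _ := add_le_add (le_max_left _ _) (le_max_left _ _)
  · calc |x.2 - z.2| ^ (1/(2*s)) ≤ (|x.2 - y.2| + |y.2 - z.2|) ^ (1/(2*s)) := by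
          apply Real.rpow_le_rpow (abs_nonneg _) _ hq0
          exact abs_sub_le _ _ _
      _ ≤ |x.2 - y.2| ^ (1/(2*s)) + |y.2 - z.2| ^ (1/(2*s)) := by
          have := NNReal.rpow_add_le_add_rpow (Real.toNNReal |x.2 - y.2|)
            (Real.toNNReal |y.2 - z.2|) hq0 hq1
          have h2 := NNReal.coe_le_coe.2 this
          push_cast [NNReal.coe_rpow, Real.coe_toNNReal _ (abs_nonneg _)] at h2
          convert h2 using 2 <;> simp
      _ ≤ _ := add_le_add (le_max_right _ _) (le_max_right _ _)

lemma continuous_pdist_left (hs : 1/2 < s) (w : (Fin n → ℝ) × ℝ) :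
    Continuous fun z : (Fin n → ℝ) × ℝ => pdist n s z w := by
  unfold pdist
  apply Continuous.max
  · exact ((continuous_fst.sub continuous_const)).norm
  · apply Continuous.rpow_const
    · exact (continuous_snd.sub continuous_const).abs
    · intro x; right; positivity

lemma continuous_pdist_right (hs : 1/2 < s) (z : (Fin n → ℝ) × ℝ) :
    Continuous fun w : (Fin n → ℝ) × ℝ => pdist n s z w := by
  simpa only [pdist_comm] using continuous_pdist_left hs z

lemma pdistToSet_nonneg (z : (Fin n → ℝ) × ℝ) (S : Set ((Fin n → ℝ) × ℝ)) :
    0 ≤ pdistToSet n s z S := by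
  apply Real.sInf_nonneg
  rintro y ⟨w, -, rfl⟩; exact pdist_nonneg _ _

lemma pdistToSet_le (z : (Fin n → ℝ) × ℝ) {S : Set ((Fin n → ℝ) × ℝ)} {p : (Fin n → ℝ) × ℝ}
    (hp : p ∈ S) : pdistToSet n s z S ≤ pdist n s z p := by
  apply csInf_le ⟨0, ?_⟩ (mem_image_of_mem _ hp)
  rintro y ⟨w, -, rfl⟩; exact pdist_nonneg _ _

lemma le_pdistToSet {S : Set ((Fin n → ℝ) × ℝ)} (hS : S.Nonempty) {z : (Fin n → ℝ) × ℝ} {a : ℝ}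
    (ha : ∀ p ∈ S, a ≤ pdist n s z p) : a ≤ pdistToSet n s z S := by
  apply le_csInf (hS.image _)
  rintro y ⟨w, hw, rfl⟩; exact ha w hw

lemma continuous_pdistToSet (hs : 1/2 < s) (hs1 : s ≤ 1) {S : Set ((Fin n → ℝ) × ℝ)}
    (hS : S.Nonempty) : Continuous fun z => pdistToSet n s z S := by
  rw [Metric.continuous_iff]
  intro z ε hε
  have hq : (0:ℝ) < 1/(2*s) := by positivity
  refine ⟨min ε (ε ^ (2*s)), lt_min hε (by positivity), fun z' hz' => ?_⟩
  have key : ∀ a b : (Fin n → ℝ) × ℝ, pdistToSet n s a S ≤ pdistToSet n s b S + pdist n s a b := by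
    intro a b
    have : ∀ p ∈ S, pdistToSet n s a S - pdist n s a b ≤ pdist n s b p := by
      intro p hp
      have := pdistToSet_le (s := s) a hp
      have htri := pdist_triangle hs hs1 a b p
      linarith
    have := le_pdistToSet hS (z := b) (a := pdistToSet n s a S - pdist n s a b) this
    linarith
  have hpd : pdist n s z' z < ε := by
    rw [Prod.dist_eq, max_lt_iff] at hz'
    obtain ⟨h1, h2⟩ := hz'
    apply max_lt
    · rw [dist_eq_norm] at h1; exact lt_of_lt_of_le (lt_of_lt_of_le h1 (min_le_left _ _)) le_rfl
    · have h2' : |z'.2 - z.2| < ε ^ (2*s) := by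
        rw [Real.dist_eq] at h2; exact lt_of_lt_of_le h2 (min_le_right _ _)
      calc |z'.2 - z.2| ^ (1/(2*s)) < (ε ^ (2*s)) ^ (1/(2*s)) :=
            Real.rpow_lt_rpow (abs_nonneg _) h2' hq
        _ = ε := by
            rw [← Real.rpow_mul hε.le, mul_one_div, div_self (by positivity : (2*s) ≠ 0),
              Real.rpow_one]
  have h1 := key z' z
  have h2 := key z z'
  rw [Real.dist_eq, abs_sub_lt_iff]
  rw [pdist_comm] at h2
  constructor <;> linarith

lemma isClosed_parCubeC (c : (Fin n → ℝ) × ℝ) (h : ℝ) : IsClosed (parCubeC n s c h) := by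
  have h1 : IsClosed {z : (Fin n → ℝ) × ℝ | ∀ i, |z.1 i - c.1 i| ≤ h / 2} := by
    have : {z : (Fin n → ℝ) × ℝ | ∀ i, |z.1 i - c.1 i| ≤ h / 2} =
        ⋂ i, {z : (Fin n → ℝ) × ℝ | |z.1 i - c.1 i| ≤ h / 2} := by
      ext z; simp [mem_iInter]
    rw [this]
    refine isClosed_iInter fun i => ?_
    exact isClosed_le (by fun_prop) continuous_const
  have h2 : IsClosed {z : (Fin n → ℝ) × ℝ | |z.2 - c.2| ≤ h ^ (2*s) / 2} :=
    isClosed_le (by fun_prop) continuous_const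
  exact h1.inter h2

lemma parCubeC_subset_double {c : (Fin n → ℝ) × ℝ} {h : ℝ} (hh : 0 < h) (hs : 1/2 < s) :
    parCubeC n s c h ⊆ parCubeC n s c (2 * h) := by
  rintro z ⟨h1, h2⟩
  refine ⟨fun i => le_trans (h1 i) (by linarith), le_trans h2 ?_⟩
  have : h ^ (2*s) ≤ (2*h) ^ (2*s) :=
    Real.rpow_le_rpow hh.le (by linarith) (by positivity)
  linarith

lemma pdist_le_of_mem_double {c : (Fin n → ℝ) × ℝ} {h : ℝ} (hh : 0 < h) (hs : 1/2 < s)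
    {z w : (Fin n → ℝ) × ℝ} (hz : z ∈ parCubeC n s c (2*h)) (hw : w ∈ parCubeC n s c (2*h)) :
    pdist n s z w ≤ 2 * h := by
  obtain ⟨hz1, hz2⟩ := hz
  obtain ⟨hw1, hw2⟩ := hw
  refine max_le ?_ ?_
  · rw [pi_norm_le_iff_of_nonneg (by linarith)]
    intro i
    have h1 := hz1 i; have h2 := hw1 i
    have : |z.1 i - w.1 i| ≤ 2 * h := by
      have := abs_sub_le (z.1 i) (c.1 i) (w.1 i)
      rw [abs_sub_comm (c.1 i) (w.1 i)] at this
      linarith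
    simpa [Real.norm_eq_abs] using this
  · have habs : |z.2 - w.2| ≤ (2*h) ^ (2*s) := by
      have := abs_sub_le z.2 c.2 w.2
      rw [abs_sub_comm c.2 w.2] at this
      linarith
    calc |z.2 - w.2| ^ (1/(2*s)) ≤ ((2*h) ^ (2*s)) ^ (1/(2*s)) :=
          Real.rpow_le_rpow (abs_nonneg _) habs (by positivity)
      _ = 2*h := by
          rw [← Real.rpow_mul (by linarith), mul_one_div,
            div_self (by positivity : (2*s) ≠ 0), Real.rpow_one]

lemma mem_frontier_parCubeC (hs : 1/2 < s) {c : (Fin n → ℝ) × ℝ} {h : ℝ} (hh : 0 < h) :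
    (c.1, c.2 + h ^ (2*s) / 2) ∈ frontier (parCubeC n s c h) := by
  have hmem : (c.1, c.2 + h ^ (2*s) / 2) ∈ parCubeC n s c h := by
    refine ⟨fun i => by simpa using (by positivity : (0:ℝ) ≤ h/2), ?_⟩
    simp only
    rw [add_sub_cancel_left, abs_of_nonneg (by positivity)]
  rw [frontier_eq_closure_inter_closure]
  refine ⟨subset_closure hmem, ?_⟩
  have : Filter.Tendsto (fun k : ℕ => ((c.1, c.2 + h ^ (2*s) / 2 + 1/(k+1)) : (Fin n → ℝ) × ℝ))
      Filter.atTop (nhds (c.1, c.2 + h ^ (2*s) / 2)) := by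
    rw [Prod.tendsto_iff]
    constructor
    · exact tendsto_const_nhds
    · have : Filter.Tendsto (fun k : ℕ => (1:ℝ)/(k+1)) Filter.atTop (nhds 0) :=
        tendsto_one_div_add_atTop_nhds_zero_nat
      simpa using Filter.Tendsto.const_add (c.2 + h ^ (2*s) / 2) this
  refine mem_closure_of_tendsto this (Filter.Eventually.of_forall fun k => ?_)
  intro hk
  obtain ⟨-, h2⟩ := hk
  rw [show c.2 + h ^ (2*s)/2 + 1/((k:ℝ)+1) - c.2 = h ^ (2*s)/2 + 1/((k:ℝ)+1) by ring,
    abs_of_nonneg (by positivity)] at h2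
  have : (0:ℝ) < 1/((k:ℝ)+1) := by positivity
  linarith

lemma pdistToSet_frontier_le (hs : 1/2 < s) {c : (Fin n → ℝ) × ℝ} {h : ℝ} (hh : 0 < h)
    {z : (Fin n → ℝ) × ℝ} (hz : z ∈ parCubeC n s c h) :
    pdistToSet n s z (frontier (parCubeC n s c h)) ≤ h := by
  refine le_trans (pdistToSet_le z (mem_frontier_parCubeC hs hh)) ?_
  obtain ⟨h1, h2⟩ := hz
  refine max_le ?_ ?_
  · rw [pi_norm_le_iff_of_nonneg hh.le]
    intro i
    calc ‖(z.1 - c.1) i‖ = |z.1 i - c.1 i| := by simp [Real.norm_eq_abs, Pi.sub_apply]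
      _ ≤ h := le_trans (h1 i) (by linarith)
  · have habs : |z.2 - (c.2 + h ^ (2*s) / 2)| ≤ h ^ (2*s) := by
      rw [abs_le] at h2 ⊢
      have : (0:ℝ) ≤ h ^ (2*s) := by positivity
      constructor <;> linarith
    calc |z.2 - (c.2 + h ^ (2*s)/2)| ^ (1/(2*s)) ≤ (h ^ (2*s)) ^ (1/(2*s)) :=
          Real.rpow_le_rpow (abs_nonneg _) habs (by positivity)
      _ = h := by
          rw [← Real.rpow_mul hh.le, mul_one_div, div_self (by positivity : (2*s) ≠ 0),
            Real.rpow_one]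

lemma segment_inter_frontier {E : Type*} [AddCommGroup E] [Module ℝ E] [TopologicalSpace E]
    [IsTopologicalAddGroup E] [ContinuousSMul ℝ E]
    {Q : Set E} (hQ : IsClosed Q) {z w : E} (hz : z ∈ Q) (hw : w ∉ Q) :
    ∃ p ∈ segment ℝ z w, p ∈ frontier Q := by
  have hconn : IsPreconnected (segment ℝ z w) := (convex_segment z w).isPreconnected
  by_contra hcon
  push_neg at hcon
  have hsub : segment ℝ z w ⊆ interior Q ∪ (closure Q)ᶜ := by
    intro p hp
    by_cases hpQ : p ∈ closure Q
    · left
      rcases (em (p ∈ interior Q)) with h' | h'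
      · exact h'
      · exact absurd ⟨hpQ, h'⟩ (hcon p hp)
    · right; exact hpQ
  have h1 : (segment ℝ z w ∩ interior Q).Nonempty ∨ True := Or.inr trivial
  have hzint : z ∈ interior Q := by
    rcases hsub (left_mem_segment ℝ z w) with h' | h'
    · exact h'
    · exact absurd (subset_closure hz) h'
  have hwc : w ∈ (closure Q)ᶜ := by
    rcases hsub (right_mem_segment ℝ z w) with h' | h'
    · exact absurd (interior_subset h') hw
    · exact h'
  obtain ⟨p, hp, hpi, hpc⟩ := hconn (interior Q) (closure Q)ᶜ isOpen_interior
    isClosed_closure.isOpen_compl hsub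
    ⟨z, left_mem_segment ℝ z w, hzint⟩ ⟨w, right_mem_segment ℝ z w, hwc⟩
  exact hpc (subset_closure (interior_subset hpi))

lemma pdistToSet_frontier_le_pdist (hs : 1/2 < s) {c : (Fin n → ℝ) × ℝ} {h : ℝ}
    {z w : (Fin n → ℝ) × ℝ} (hz : z ∈ parCubeC n s c h) (hw : w ∉ parCubeC n s c h) :
    pdistToSet n s z (frontier (parCubeC n s c h)) ≤ pdist n s z w := by
  obtain ⟨p, hpseg, hpfr⟩ := segment_inter_frontier (isClosed_parCubeC c h) hz hw
  refine le_trans (pdistToSet_le z hpfr) ?_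
  obtain ⟨a, b, ha, hb, hab, rfl⟩ := hpseg
  have hb1 : b ≤ 1 := by linarith
  have hz1 : z.1 - (a • z + b • w).1 = b • (z.1 - w.1) := by
    have : a = 1 - b := by linarith
    subst this
    simp [Prod.smul_fst, smul_sub, sub_smul, one_smul]
    module
  have hz2 : z.2 - (a • z + b • w).2 = b * (z.2 - w.2) := by
    have : a = 1 - b := by linarith
    subst this
    simp only [Prod.snd_add, Prod.smul_snd, smul_eq_mul]
    ring
  refine max_le ?_ ?_
  · rw [hz1, norm_smul, Real.norm_eq_abs, abs_of_nonneg hb]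
    calc b * ‖z.1 - w.1‖ ≤ 1 * ‖z.1 - w.1‖ :=
        mul_le_mul_of_nonneg_right hb1 (norm_nonneg _)
      _ ≤ _ := by rw [one_mul]; exact le_max_left _ _
  · rw [hz2, abs_mul, abs_of_nonneg hb]
    have step : (b * |z.2 - w.2|) ^ (1/(2*s)) ≤ |z.2 - w.2| ^ (1/(2*s)) := by
      apply Real.rpow_le_rpow (by positivity) ?_ (by positivity)
      calc b * |z.2 - w.2| ≤ 1 * |z.2 - w.2| :=
          mul_le_mul_of_nonneg_right hb1 (abs_nonneg _)
        _ = _ := one_mul _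
    exact le_trans step (le_max_right _ _)

lemma exists_dyadic {R r : ℝ} (h0 : 0 < r) (hR : r ≤ R) :
    ∃ k : ℕ, R / 2^(k+1) < r ∧ r ≤ R / 2^k := by
  have hRpos : 0 < R := lt_of_lt_of_le h0 hR
  have hex : ∃ k : ℕ, R / 2^(k+1) < r := by
    obtain ⟨m, hm⟩ := exists_nat_gt (R / r)
    refine ⟨m, ?_⟩
    have h2m : (R / r : ℝ) < 2^(m+1) := by
      calc (R / r : ℝ) < m := hm
        _ ≤ 2^m := by exact_mod_cast (show m < 2^m from Nat.lt_two_pow_self).le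
        _ ≤ 2^(m+1) := by
            have : (2:ℝ)^m ≤ 2^(m+1) := by
              apply pow_le_pow_right₀ (by norm_num) (by omega)
            exact this
    rw [div_lt_iff₀ h0] at h2m
    rw [div_lt_iff₀ (by positivity)]
    linarith [h2m]
  classical
  let k := Nat.find hex
  refine ⟨k, Nat.find_spec hex, ?_⟩
  rcases Nat.eq_zero_or_pos k with hk | hk
  · rw [hk]; simpa using hR
  · have := Nat.find_min hex (m := k - 1) (by omega)
    push_neg at this
    have hkk : k - 1 + 1 = k := by omega
    rwa [hkk] at this

lemma inner_bound (hs : 1/2 < s) (hs1 : s ≤ 1)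
    (μ : Measure ((Fin n → ℝ) × ℝ)) (c : (Fin n → ℝ) × ℝ) {h : ℝ} (hh : 0 < h)
    (hgrow : ∀ (z : (Fin n → ℝ) × ℝ) (r : ℝ), 0 < r →
      μ (pBall n s z r) ≤ ENNReal.ofReal (r ^ (n + 1)))
    {z : (Fin n → ℝ) × ℝ} (hz : z ∈ parCubeC n s c h) {j : ℕ}
    (hd : 2*h/2^(j+1) < pdistToSet n s z (frontier (parCubeC n s c h))) :
    ∫⁻ w in parCubeC n s c (2*h) \ parCubeC n s c h,
        ENNReal.ofReal ((pdist n s z w ^ (n+1))⁻¹) ∂μ ≤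
      (j+1) * ENNReal.ofReal (4^(n+1)) := by
  set Q := parCubeC n s c h with hQ
  set d := pdistToSet n s z (frontier Q) with hdd
  -- annuli
  set A : ℕ → Set ((Fin n → ℝ) × ℝ) :=
    fun k => {w | 2*h/2^(k+1) < pdist n s z w ∧ pdist n s z w ≤ 2*h/2^k} with hA
  set B : ℕ → Set ((Fin n → ℝ) × ℝ) := fun k => if k ≤ j then A k else ∅ with hB
  have hcover : parCubeC n s c (2*h) \ Q ⊆ ⋃ k, B k := by
    intro w hw
    have hwQ : w ∉ Q := hw.2
    have hp1 : d ≤ pdist n s z w := pdistToSet_frontier_le_pdist hs hz hwQ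
    have hp0 : 2*h/2^(j+1) < pdist n s z w := lt_of_lt_of_le hd hp1
    have hple : pdist n s z w ≤ 2*h := by
      refine pdist_le_of_mem_double hh hs ?_ hw.1
      exact parCubeC_subset_double hh hs hz
    have hppos : 0 < pdist n s z w := by
      have : (0:ℝ) < 2*h/2^(j+1) := by positivity
      linarith
    obtain ⟨k, hk1, hk2⟩ := exists_dyadic hppos hple
    have hkj : k ≤ j := by
      by_contra hcon
      push_neg at hcon
      have : (2:ℝ)*h/2^k ≤ 2*h/2^(j+1) := by
        apply div_le_div_of_nonneg_left (by linarith) (by positivity)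
        apply pow_le_pow_right₀ (by norm_num)
        omega
      linarith
    refine mem_iUnion.2 ⟨k, ?_⟩
    rw [hB]
    simp only [if_pos hkj]
    exact ⟨hk1, hk2⟩
  calc ∫⁻ w in parCubeC n s c (2*h) \ Q, ENNReal.ofReal ((pdist n s z w ^ (n+1))⁻¹) ∂μ
      ≤ ∫⁻ w in ⋃ k, B k, ENNReal.ofReal ((pdist n s z w ^ (n+1))⁻¹) ∂μ :=
        lintegral_mono_set hcover
    _ ≤ ∑' k, ∫⁻ w in B k, ENNReal.ofReal ((pdist n s z w ^ (n+1))⁻¹) ∂μ :=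
        lintegral_iUnion_le _ _
    _ ≤ ∑' k, (if k ≤ j then ENNReal.ofReal (4^(n+1)) else 0) := by
        apply ENNReal.tsum_le_tsum
        intro k
        rw [hB]
        by_cases hkj : k ≤ j
        · simp only [if_pos hkj]
          -- bound integral over annulus A k
          have hmeasA : MeasurableSet (A k) := by
            have hcont := continuous_pdist_right (n := n) hs z
            exact (isOpen_lt continuous_const hcont).measurableSet.inter
              (isClosed_le hcont continuous_const).measurableSet
          have hbound : ∀ w ∈ A k, ENNReal.ofReal ((pdist n s z w ^ (n+1))⁻¹) ≤
              ENNReal.ofReal (((h/2^k) ^ (n+1))⁻¹) := by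
            intro w hw
            apply ENNReal.ofReal_le_ofReal
            have h1 : (h:ℝ)/2^k < pdist n s z w := by
              have : (2:ℝ)*h/2^(k+1) = h/2^k := by ring
              rw [← this]; exact hw.1
            have hpos : (0:ℝ) < h/2^k := by positivity
            apply inv_anti₀ (by positivity)
            exact pow_le_pow_left₀ hpos.le h1.le _
          have hmuA : μ (A k) ≤ ENNReal.ofReal ((4*h/2^k)^(n+1)) := by
            refine le_trans (measure_mono ?_) (hgrow z (4*h/2^k) (by positivity))
            intro w hw
            have : pdist n s w z ≤ 2*h/2^k := by rw [pdist_comm]; exact hw.2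
            have h24 : (2:ℝ)*h/2^k < 4*h/2^k := by
              gcongr
              linarith
            exact lt_of_le_of_lt this h24
          calc ∫⁻ w in A k, ENNReal.ofReal ((pdist n s z w ^ (n+1))⁻¹) ∂μ
              ≤ ∫⁻ _ in A k, ENNReal.ofReal (((h/2^k) ^ (n+1))⁻¹) ∂μ :=
                setLIntegral_mono' hmeasA hbound
            _ = ENNReal.ofReal (((h/2^k) ^ (n+1))⁻¹) * μ (A k) := by
                rw [setLIntegral_const]
            _ ≤ ENNReal.ofReal (((h/2^k) ^ (n+1))⁻¹) * ENNReal.ofReal ((4*h/2^k)^(n+1)) :=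
                mul_le_mul_right hmuA _
            _ = ENNReal.ofReal (4^(n+1)) := by
                rw [← ENNReal.ofReal_mul (by positivity)]
                congr 1
                rw [← inv_pow, ← mul_pow]
                congr 1
                field_simp
        · simp [if_neg hkj]
    _ = (j+1) * ENNReal.ofReal (4^(n+1)) := by
        rw [tsum_eq_sum (s := Finset.range (j+1)) (by
          intro k hk
          rw [if_neg]
          simp only [Finset.mem_range] at hk
          omega)]
        rw [Finset.sum_ite_of_true (by intro k hk; simp only [Finset.mem_range] at hk; omega)]
        simp [Finset.sum_const, mul_comm]

lemma tsum_layers : ∑' k : ℕ, ((k:ℝ)+1) * (1/2)^k = 4 := by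
  have hr : ‖(1/2 : ℝ)‖ < 1 := by
    rw [Real.norm_eq_abs, abs_of_nonneg (by norm_num : (0:ℝ) ≤ 1/2)]; norm_num
  have h1 : Summable (fun k : ℕ => (k:ℝ) * (1/2)^k) := by
    have := summable_pow_mul_geometric_of_norm_lt_one (R := ℝ) 1 hr
    simpa using this
  have h2 : Summable (fun k : ℕ => ((1:ℝ)/2)^k) := summable_geometric_of_lt_one (by norm_num) (by norm_num)
  have heq : (fun k : ℕ => ((k:ℝ)+1) * (1/2)^k) =
      fun k : ℕ => (k:ℝ) * (1/2)^k + (1/2)^k := by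
    funext k; ring
  rw [heq, h1.tsum_add h2]
  have e1 : ∑' k : ℕ, (k:ℝ) * (1/2)^k = 2 := by
    rw [tsum_coe_mul_geometric_of_norm_lt_one hr]; norm_num
  have e2 : ∑' k : ℕ, ((1:ℝ)/2)^k = 2 := by
    rw [tsum_geometric_of_lt_one (by norm_num) (by norm_num)]; norm_num
  rw [e1, e2]; norm_num

lemma summable_layers : Summable (fun k : ℕ => ((k:ℝ)+1) * (1/2)^k) := by
  have hr : ‖(1/2 : ℝ)‖ < 1 := by
    rw [Real.norm_eq_abs, abs_of_nonneg (by norm_num : (0:ℝ) ≤ 1/2)]; norm_num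
  have h1 : Summable (fun k : ℕ => (k:ℝ) * (1/2)^k) := by
    have := summable_pow_mul_geometric_of_norm_lt_one (R := ℝ) 1 hr
    simpa using this
  have h2 : Summable (fun k : ℕ => ((1:ℝ)/2)^k) := summable_geometric_of_lt_one (by norm_num) (by norm_num)
  have := h1.add h2
  apply this.congr
  intro k; ring

lemma outer_bound (hs : 1/2 < s) (hs1 : s ≤ 1) {A : ℝ} (hA : 0 < A)
    (μ : Measure ((Fin n → ℝ) × ℝ)) (c : (Fin n → ℝ) × ℝ) {h : ℝ} (hh : 0 < h)
    (hgrow : ∀ (z : (Fin n → ℝ) × ℝ) (r : ℝ), 0 < r →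
      μ (pBall n s z r) ≤ ENNReal.ofReal (r ^ (n + 1)))
    (hbd : ∀ α : ℝ, 0 < α →
      μ {z ∈ parCubeC n s c (2 * h) |
          pdistToSet n s z (frontier (parCubeC n s c h)) ≤ α * h} ≤
        ENNReal.ofReal (A * α) * μ (parCubeC n s c (2 * h))) :
    ∫⁻ z in parCubeC n s c h,
        ENNReal.ofReal (∫ w in parCubeC n s c (2 * h) \ parCubeC n s c h,
          (pdist n s z w ^ (n + 1))⁻¹ ∂μ) ∂μ ≤
      ENNReal.ofReal (8 * A * 4^(n+1)) * μ (parCubeC n s c (2 * h)) := by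
  set Q := parCubeC n s c h with hQdef
  set Q2 := parCubeC n s c (2*h) with hQ2def
  set E := Q2 \ Q with hEdef
  set d : (Fin n → ℝ) × ℝ → ℝ := fun z => pdistToSet n s z (frontier Q) with hd
  set F : (Fin n → ℝ) × ℝ → ℝ :=
    fun z => ∫ w in E, (pdist n s z w ^ (n + 1))⁻¹ ∂μ with hF
  set L : (Fin n → ℝ) × ℝ → ℝ≥0∞ :=
    fun z => ∫⁻ w in E, ENNReal.ofReal ((pdist n s z w ^ (n+1))⁻¹) ∂μ with hL
  have hFeq : ∀ z, F z = (L z).toReal := by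
    intro z
    rw [hF, hL]
    apply integral_eq_lintegral_of_nonneg_ae
    · exact Filter.Eventually.of_forall fun w =>
        inv_nonneg.2 (pow_nonneg (pdist_nonneg _ _) _)
    · apply Measurable.aestronglyMeasurable
      exact (((continuous_pdist_right hs z).pow (n+1)).measurable).inv
  have hofF : ∀ z, ENNReal.ofReal (F z) ≤ L z := fun z => by
    rw [hFeq z]; exact ENNReal.ofReal_toReal_le
  -- layers
  set V : ℕ → Set ((Fin n → ℝ) × ℝ) :=
    fun k => {z ∈ Q | 2*h/2^(k+1) < d z ∧ d z ≤ 2*h/2^k} with hV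
  set Q0 : Set ((Fin n → ℝ) × ℝ) := {z ∈ Q | d z ≤ 0} with hQ0
  have hfrne : (frontier Q).Nonempty := ⟨_, mem_frontier_parCubeC hs hh⟩
  have hdcont : Continuous d := continuous_pdistToSet hs hs1 hfrne
  have hVmeas : ∀ k, MeasurableSet (V k) := by
    intro k
    have : V k = Q ∩ d ⁻¹' (Set.Ioc (2*h/2^(k+1)) (2*h/2^k)) := by
      ext z
      simp only [hV, mem_setOf_eq, mem_inter_iff, mem_preimage, mem_Ioc]
    rw [this]
    exact (isClosed_parCubeC c h).measurableSet.inter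
      (hdcont.measurable measurableSet_Ioc)
  have hcover : Q ⊆ Q0 ∪ ⋃ k, V k := by
    intro z hz
    by_cases hz0 : d z ≤ 0
    · exact Or.inl ⟨hz, hz0⟩
    · push_neg at hz0
      have hdzle : d z ≤ 2*h := by
        have hle : d z ≤ h := pdistToSet_frontier_le hs hh hz
        linarith
      obtain ⟨k, hk1, hk2⟩ := exists_dyadic hz0 hdzle
      exact Or.inr (mem_iUnion.2 ⟨k, hz, hk1, hk2⟩)
  -- μ Q2 finite
  have hQ2fin : μ Q2 < ⊤ := by
    have hsub : Q2 ⊆ pBall n s c (3*h) := by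
      intro w hw
      have hc : c ∈ Q2 := by
        refine ⟨fun i => by simpa using (by positivity : (0:ℝ) ≤ 2*h/2), ?_⟩
        simpa using (by positivity : (0:ℝ) ≤ (2*h)^(2*s)/2)
      have := pdist_le_of_mem_double hh hs hw hc
      exact lt_of_le_of_lt this (by linarith)
    exact lt_of_le_of_lt (le_trans (measure_mono hsub) (hgrow c (3*h) (by positivity)))
      ENNReal.ofReal_lt_top
  -- μ Q0 = 0
  have hQ0null : μ Q0 = 0 := by
    have hb : ∀ m : ℕ, μ Q0 ≤ ENNReal.ofReal (A * (1/(m+1))) * μ Q2 := by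
      intro m
      refine le_trans (measure_mono ?_) (hbd (1/(m+1)) (by positivity))
      rintro z ⟨hz, hz0⟩
      refine ⟨parCubeC_subset_double hh hs hz, ?_⟩
      have hpos : (0:ℝ) < 1/((m:ℝ)+1) * h := by positivity
      have : d z ≤ 0 := hz0
      linarith
    have htend : Filter.Tendsto (fun m : ℕ => ENNReal.ofReal (A * (1/(m+1))) * μ Q2)
        Filter.atTop (nhds 0) := by
      have h1 : Filter.Tendsto (fun m : ℕ => A * (1/(m+1) : ℝ)) Filter.atTop (nhds 0) := by
        have := tendsto_one_div_add_atTop_nhds_zero_nat (𝕜 := ℝ)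
        simpa using this.const_mul A
      have h2 : Filter.Tendsto (fun m : ℕ => ENNReal.ofReal (A * (1/(m+1) : ℝ)))
          Filter.atTop (nhds 0) := by
        have := (ENNReal.continuous_ofReal.tendsto 0).comp h1
        simpa [Function.comp_def] using this
      have := ENNReal.Tendsto.mul_const h2 (Or.inr hQ2fin.ne)
      simpa using this
    exact le_antisymm (ge_of_tendsto' htend hb) zero_le
  -- main chain
  calc ∫⁻ z in Q, ENNReal.ofReal (F z) ∂μ
      ≤ ∫⁻ z in Q0 ∪ ⋃ k, V k, ENNReal.ofReal (F z) ∂μ := lintegral_mono_set hcover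
    _ ≤ (∫⁻ z in Q0, ENNReal.ofReal (F z) ∂μ) +
        ∫⁻ z in ⋃ k, V k, ENNReal.ofReal (F z) ∂μ := lintegral_union_le _ _ _
    _ ≤ 0 + ∑' k, ∫⁻ z in V k, ENNReal.ofReal (F z) ∂μ := by
        apply add_le_add
        · rw [setLIntegral_measure_zero _ _ hQ0null]
        · exact lintegral_iUnion_le _ _
    _ = ∑' k, ∫⁻ z in V k, ENNReal.ofReal (F z) ∂μ := by rw [zero_add]
    _ ≤ ∑' k : ℕ, ((k:ℝ≥0∞)+1) * ENNReal.ofReal (4^(n+1)) * (ENNReal.ofReal (A * (2/2^k)) * μ Q2) := by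
        apply ENNReal.tsum_le_tsum
        intro k
        have hVsub : μ (V k) ≤ ENNReal.ofReal (A * (2/2^k)) * μ Q2 := by
          refine le_trans (measure_mono ?_) (hbd (2/2^k) (by positivity))
          rintro z ⟨hz, -, hz2⟩
          refine ⟨parCubeC_subset_double hh hs hz, ?_⟩
          calc d z ≤ 2*h/2^k := hz2
            _ = 2/2^k * h := by ring
        calc ∫⁻ z in V k, ENNReal.ofReal (F z) ∂μ
            ≤ ∫⁻ _ in V k, ((k:ℝ≥0∞)+1) * ENNReal.ofReal (4^(n+1)) ∂μ := by
              apply setLIntegral_mono' (hVmeas k)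
              intro z hz
              refine le_trans (hofF z) ?_
              have := inner_bound hs hs1 μ c hh hgrow hz.1 (j := k) hz.2.1
              rw [hL]
              exact this
          _ = ((k:ℝ≥0∞)+1) * ENNReal.ofReal (4^(n+1)) * μ (V k) := setLIntegral_const _ _
          _ ≤ _ := mul_le_mul_right hVsub _
    _ ≤ ∑' k : ℕ, ENNReal.ofReal ((2*A*4^(n+1)) * (((k:ℝ)+1) * (1/2)^k)) * μ Q2 := by
        apply ENNReal.tsum_le_tsum
        intro k
        rw [← mul_assoc]
        apply mul_le_mul_left
        have : ((k:ℝ≥0∞)+1) = ENNReal.ofReal ((k:ℝ)+1) := by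
          rw [ENNReal.ofReal_add (by positivity) (by norm_num), ENNReal.ofReal_natCast,
            ENNReal.ofReal_one]
        rw [this, ← ENNReal.ofReal_mul (by positivity), ← ENNReal.ofReal_mul (by positivity)]
        apply ENNReal.ofReal_le_ofReal
        apply le_of_eq
        field_simp
        rw [← mul_pow]; norm_num
    _ = ENNReal.ofReal (∑' k : ℕ, (2*A*4^(n+1)) * (((k:ℝ)+1) * (1/2)^k)) * μ Q2 := by
        rw [ENNReal.tsum_mul_right, ENNReal.ofReal_tsum_of_nonneg]
        · intro k; positivity
        · exact (summable_layers.mul_left _)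
    _ = ENNReal.ofReal (8 * A * 4^(n+1)) * μ Q2 := by
        rw [tsum_mul_left, tsum_layers]
        congr 1
        ring

/-- If `μ` has upper `s`-parabolic growth of degree `n+1` with constant `1`, and `Q̂` is an
`s`-parabolic cube with `A`-small boundary which is `(2, 3^{n+2})`-doubling, then
`(1/μ(Q̂)) ∫_{Q̂} ∫_{2Q̂∖Q̂} |x̄ - ȳ|_{p_s}^{-(n+1)} dμ(ȳ) dμ(x̄) ≤ C(n,s,A)`. -/
theorem stmt_11 (n : ℕ) (s : ℝ) (hs : 1 / 2 < s) (hs1 : s ≤ 1) (A : ℝ) (hA : 0 < A) :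
    ∃ C : ℝ, 0 < C ∧
      ∀ (μ : Measure ((Fin n → ℝ) × ℝ)) (c : (Fin n → ℝ) × ℝ) (h : ℝ), 0 < h →
        (∀ (z : (Fin n → ℝ) × ℝ) (r : ℝ), 0 < r →
          μ (pBall n s z r) ≤ ENNReal.ofReal (r ^ (n + 1))) →
        (∀ α : ℝ, 0 < α →
          μ {z ∈ parCubeC n s c (2 * h) |
              pdistToSet n s z (frontier (parCubeC n s c h)) ≤ α * h} ≤
            ENNReal.ofReal (A * α) * μ (parCubeC n s c (2 * h))) →
        μ (parCubeC n s c (2 * h)) ≤ 3 ^ (n + 2) * μ (parCubeC n s c h) →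
        ⨍ z in parCubeC n s c h,
            (∫ w in parCubeC n s c (2 * h) \ parCubeC n s c h,
              (pdist n s z w ^ (n + 1))⁻¹ ∂μ) ∂μ ≤ C := by
  refine ⟨8 * A * 4^(n+1) * 3^(n+2) + 1, by positivity, ?_⟩
  intro μ c h hh hgrow hbd hdbl
  set Q := parCubeC n s c h with hQdef
  set Q2 := parCubeC n s c (2*h) with hQ2def
  set F : (Fin n → ℝ) × ℝ → ℝ :=
    fun z => ∫ w in Q2 \ Q, (pdist n s z w ^ (n+1))⁻¹ ∂μ with hF
  rw [setAverage_eq]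
  have hC0 : (0:ℝ) ≤ 8 * A * 4^(n+1) * 3^(n+2) := by positivity
  by_cases hμQ : μ Q = 0
  · rw [Measure.restrict_eq_zero.2 hμQ, integral_zero_measure]
    simp only [smul_zero]
    positivity
  by_cases hFi : Integrable F (μ.restrict Q)
  swap
  · rw [integral_undef hFi]
    simp only [smul_zero]
    positivity
  have hQ2fin : μ Q2 < ⊤ := by
    have hsub : Q2 ⊆ pBall n s c (3*h) := by
      intro w hw
      have hc : c ∈ Q2 := by
        refine ⟨fun i => by simpa using (by positivity : (0:ℝ) ≤ 2*h/2), ?_⟩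
        simpa using (by positivity : (0:ℝ) ≤ (2*h)^(2*s)/2)
      have := pdist_le_of_mem_double hh hs hw hc
      exact lt_of_le_of_lt this (by linarith)
    exact lt_of_le_of_lt (le_trans (measure_mono hsub) (hgrow c (3*h) (by positivity)))
      ENNReal.ofReal_lt_top
  have hμQfin : μ Q ≠ ⊤ :=
    (lt_of_le_of_lt (measure_mono (parCubeC_subset_double hh hs)) hQ2fin).ne
  have h1 : ∫ z in Q, F z ∂μ ≤ 8 * A * 4^(n+1) * 3^(n+2) * (μ Q).toReal := by
    have heq : ∫ z in Q, F z ∂μ = (∫⁻ z in Q, ENNReal.ofReal (F z) ∂μ).toReal := by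
      apply integral_eq_lintegral_of_nonneg_ae
      · exact Filter.Eventually.of_forall fun z =>
          integral_nonneg fun w => inv_nonneg.2 (pow_nonneg (pdist_nonneg _ _) _)
      · exact hFi.aestronglyMeasurable
    rw [heq]
    have h2 := outer_bound hs hs1 hA μ c hh hgrow hbd
    have h3 : ∫⁻ z in Q, ENNReal.ofReal (F z) ∂μ ≤
        ENNReal.ofReal (8*A*4^(n+1)) * ((3:ℝ≥0∞)^(n+2) * μ Q) :=
      le_trans h2 (mul_le_mul_right hdbl _)
    have hfin : ENNReal.ofReal (8*A*4^(n+1)) * ((3:ℝ≥0∞)^(n+2) * μ Q) ≠ ⊤ := by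
      apply ENNReal.mul_ne_top ENNReal.ofReal_ne_top
      apply ENNReal.mul_ne_top _ hμQfin
      simp [ENNReal.pow_ne_top]
    calc (∫⁻ z in Q, ENNReal.ofReal (F z) ∂μ).toReal
        ≤ (ENNReal.ofReal (8*A*4^(n+1)) * ((3:ℝ≥0∞)^(n+2) * μ Q)).toReal :=
          ENNReal.toReal_mono hfin h3
      _ = 8 * A * 4^(n+1) * 3^(n+2) * (μ Q).toReal := by
          rw [ENNReal.toReal_mul, ENNReal.toReal_mul, ENNReal.toReal_ofReal (by positivity),
            ENNReal.toReal_pow]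
          simp only [ENNReal.toReal_ofNat]
          ring
  have hpos : 0 < (μ Q).toReal := ENNReal.toReal_pos hμQ hμQfin
  rw [smul_eq_mul]
  calc (μ Q).toReal⁻¹ * ∫ z in Q, F z ∂μ
      ≤ (μ Q).toReal⁻¹ * (8 * A * 4^(n+1) * 3^(n+2) * (μ Q).toReal) :=
        mul_le_mul_of_nonneg_left h1 (inv_nonneg.2 hpos.le)
    _ = 8 * A * 4^(n+1) * 3^(n+2) := by
        field_simp
    _ ≤ 8 * A * 4^(n+1) * 3^(n+2) + 1 := by linarith
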